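/- Let α ∈ (0,2), set C_α := ((2−α)(4−α)/π)^{1/(4−α)}, and for an integer k ≥ 1 define λ_k(α) := C_α^{4−α}·2^{−(4−α)}·( μ_k(α) + μ₀(α) ) / ( k(k+1) ), where μ_k(α) := 2^{2−α}·π·Γ(k+α/2)·Γ((2−α)/2) / ( Γ(α/2)·Γ(k+2−α/2) ), so that μ₀(α) = 2^{3−α}π/(2−α) and μ₁(α) = 2^{3−α}πα/((2−α)(4−α)). Then λ₁(α) = 1, and λ_k(α) < 2/(k(k+1)) < 1 for every integer k ≥ 2. -/

import Mathlib

open Real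

set_option maxHeartbeats 1000000

noncomputable def Ca (α : ℝ) : ℝ := ((2 - α) * (4 - α) / Real.pi) ^ ((1 : ℝ) / (4 - α))

noncomputable def μFH (α : ℝ) (k : ℕ) : ℝ :=
  (2 : ℝ) ^ (2 - α) * Real.pi * Real.Gamma (k + α / 2) * Real.Gamma ((2 - α) / 2) /
    (Real.Gamma (α / 2) * Real.Gamma (k + 2 - α / 2))

noncomputable def lamFH (α : ℝ) (k : ℕ) : ℝ :=
  Ca α ^ (4 - α) * (2 : ℝ) ^ (-(4 - α)) * (μFH α k + μFH α 0) / (k * (k + 1))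

lemma muFH_pos {α : ℝ} (hα : 0 < α) (hα' : α < 2) (k : ℕ) : 0 < μFH α k := by
  have hk : (0:ℝ) ≤ k := Nat.cast_nonneg k
  have h1 : 0 < (2:ℝ) ^ (2-α) := Real.rpow_pos_of_pos (by norm_num) _
  have h2 : 0 < Real.Gamma ((k:ℝ) + α/2) := Real.Gamma_pos_of_pos (by linarith)
  have h3 : 0 < Real.Gamma ((2-α)/2) := Real.Gamma_pos_of_pos (by linarith)
  have h4 : 0 < Real.Gamma (α/2) := Real.Gamma_pos_of_pos (by linarith)
  have h5 : 0 < Real.Gamma ((k:ℝ) + 2 - α/2) := Real.Gamma_pos_of_pos (by linarith)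
  unfold μFH
  exact div_pos (mul_pos (mul_pos (mul_pos h1 Real.pi_pos) h2) h3) (mul_pos h4 h5)

lemma muFH_succ_lt {α : ℝ} (hα : 0 < α) (hα' : α < 2) (k : ℕ) :
    μFH α (k+1) < μFH α k := by
  have hk : (0:ℝ) ≤ k := Nat.cast_nonneg k
  have h2 : 0 < Real.Gamma ((k:ℝ) + α/2) := Real.Gamma_pos_of_pos (by linarith)
  have h3 : 0 < Real.Gamma ((2-α)/2) := Real.Gamma_pos_of_pos (by linarith)
  have h4 : 0 < Real.Gamma (α/2) := Real.Gamma_pos_of_pos (by linarith)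
  have h5 : 0 < Real.Gamma ((k:ℝ) + 2 - α/2) := Real.Gamma_pos_of_pos (by linarith)
  have key : μFH α (k+1) = (((k:ℝ) + α/2)/((k:ℝ) + 2 - α/2)) * μFH α k := by
    unfold μFH
    have e1 : ((k+1:ℕ):ℝ) + α/2 = ((k:ℝ) + α/2) + 1 := by push_cast; ring
    have e2 : ((k+1:ℕ):ℝ) + 2 - α/2 = ((k:ℝ) + 2 - α/2) + 1 := by push_cast; ring
    rw [e1, e2, Real.Gamma_add_one (ne_of_gt (by linarith : (0:ℝ) < (k:ℝ) + α/2)),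
      Real.Gamma_add_one (ne_of_gt (by linarith : (0:ℝ) < (k:ℝ) + 2 - α/2))]
    have hy : (k:ℝ) + 2 - α/2 ≠ 0 := ne_of_gt (by linarith)
    set X := Real.Gamma ((k:ℝ) + α/2) with hX
    set Y := Real.Gamma ((k:ℝ) + 2 - α/2) with hY
    set A := Real.Gamma (α/2) with hA
    set C := Real.Gamma ((2-α)/2) with hC
    have hΓa : A ≠ 0 := ne_of_gt h4
    have hΓy : Y ≠ 0 := ne_of_gt h5
    field_simp
  rw [key]
  have hμ : 0 < μFH α k := muFH_pos hα hα' k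
  have hr : ((k:ℝ) + α/2)/((k:ℝ) + 2 - α/2) < 1 := by
    rw [div_lt_one (by linarith)]; linarith
  nlinarith

lemma muFH_lt {α : ℝ} (hα : 0 < α) (hα' : α < 2) :
    ∀ k : ℕ, 2 ≤ k → μFH α k < μFH α 1 := by
  intro k hk
  induction k, hk using Nat.le_induction with
  | base => exact muFH_succ_lt hα hα' 1
  | succ n hn ih => exact lt_trans (muFH_succ_lt hα hα' n) ih

lemma key_sum {α : ℝ} (hα : 0 < α) (hα' : α < 2) :
    Ca α ^ (4 - α) * (2:ℝ) ^ (-(4-α)) * (μFH α 1 + μFH α 0) = 2 := by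
  have hπ := Real.pi_pos
  have hCa : Ca α ^ (4 - α) = (2-α)*(4-α)/Real.pi := by
    unfold Ca
    rw [← Real.rpow_mul (div_nonneg (by nlinarith) (le_of_lt hπ)), one_div,
      inv_mul_cancel₀ (by linarith : (4:ℝ) - α ≠ 0), Real.rpow_one]
  have h2 : (2:ℝ)^(2-α) * (2:ℝ)^(-(4-α)) = 1/4 := by
    rw [← Real.rpow_add (by norm_num), show (2-α) + -(4-α) = ((-2 : ℤ) : ℝ) by push_cast; ring,
      Real.rpow_intCast]
    norm_num
  have hg4 : 0 < Real.Gamma (α/2) := Real.Gamma_pos_of_pos (by linarith)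
  have hg3 : 0 < Real.Gamma (1 - α/2) := Real.Gamma_pos_of_pos (by linarith)
  have e0 : ((0:ℕ):ℝ) = 0 := by norm_num
  have e1 : ((1:ℕ):ℝ) = 1 := by norm_num
  have G1 : Real.Gamma ((2-α)/2) = Real.Gamma (1 - α/2) := by norm_num; ring_nf
  have G2 : Real.Gamma ((0:ℕ) + α/2) = Real.Gamma (α/2) := by rw [e0]; norm_num
  have G3 : Real.Gamma ((0:ℕ) + 2 - α/2) = (1 - α/2) * Real.Gamma (1 - α/2) := by
    rw [e0, show (0:ℝ) + 2 - α/2 = (1 - α/2) + 1 by ring,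
      Real.Gamma_add_one (by intro h; nlinarith)]
  have G4 : Real.Gamma ((1:ℕ) + α/2) = (α/2) * Real.Gamma (α/2) := by
    rw [e1, show (1:ℝ) + α/2 = (α/2) + 1 by ring, Real.Gamma_add_one (by positivity)]
  have G5 : Real.Gamma ((1:ℕ) + 2 - α/2) = (2 - α/2) * ((1 - α/2) * Real.Gamma (1 - α/2)) := by
    rw [e1, show (1:ℝ) + 2 - α/2 = (2 - α/2) + 1 by ring,
      Real.Gamma_add_one (by intro h; nlinarith), show (2:ℝ) - α/2 = (1 - α/2) + 1 by ring,
      Real.Gamma_add_one (by intro h; nlinarith)]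
  have hne1 : (1:ℝ) - α/2 ≠ 0 := by intro h; nlinarith
  have hne2 : (2:ℝ) - α/2 ≠ 0 := by intro h; nlinarith
  have hne3 : Real.Gamma (α/2) ≠ 0 := ne_of_gt hg4
  have hne4 : Real.Gamma (1 - α/2) ≠ 0 := ne_of_gt hg3
  have hπ' : Real.pi ≠ 0 := ne_of_gt hπ
  have hμ0 : μFH α 0 = (2:ℝ)^(2-α) * Real.pi / (1 - α/2) := by
    unfold μFH
    rw [G1, G2, G3]
    set A := Real.Gamma (α/2) with hA
    set B := Real.Gamma (1 - α/2) with hB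
    rw [div_eq_div_iff (by positivity) hne1]
    ring
  have hμ1 : μFH α 1 = (2:ℝ)^(2-α) * Real.pi * (α/2) / ((2 - α/2) * (1 - α/2)) := by
    unfold μFH
    rw [G1, G4, G5]
    set A := Real.Gamma (α/2) with hA
    set B := Real.Gamma (1 - α/2) with hB
    rw [div_eq_div_iff (by positivity) (mul_ne_zero hne2 hne1)]
    ring
  rw [hCa, hμ0, hμ1]
  set t := (2:ℝ)^(2-α) with ht
  set s := (2:ℝ)^(-(4-α)) with hs
  have hne5 : (2:ℝ) - α ≠ 0 := by intro h; nlinarith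
  have hne6 : (4:ℝ) - α ≠ 0 := by intro h; nlinarith
  have hsum : t*Real.pi*(α/2)/((2 - α/2)*(1 - α/2)) + t*Real.pi/(1 - α/2)
      = 8*t*Real.pi/((4-α)*(2-α)) := by
    rw [div_add_div _ _ (mul_ne_zero hne2 hne1) hne1,
      div_eq_div_iff (mul_ne_zero (mul_ne_zero hne2 hne1) hne1) (mul_ne_zero hne6 hne5)]
    ring
  rw [hsum]
  field_simp
  linear_combination 8 * h2
  

theorem eigenvalue_comparison (α : ℝ) (hα : 0 < α) (hα' : α < 2) :
    lamFH α 1 = 1 ∧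
    ∀ k : ℕ, 2 ≤ k → lamFH α k < 2 / (k * (k + 1)) ∧ (2 : ℝ) / (k * (k + 1)) < 1 := by
  have hkey := key_sum hα hα'
  constructor
  · unfold lamFH
    rw [hkey]
    norm_num
  · intro k hk
    have hk2 : (2:ℝ) ≤ k := by exact_mod_cast hk
    have hd : (0:ℝ) < k * (k + 1) := by nlinarith
    constructor
    · have hC : 0 < Ca α ^ (4-α) * (2:ℝ)^(-(4-α)) := by
        have h0 : 0 < (2 - α) * (4 - α) / Real.pi := div_pos (by nlinarith) Real.pi_pos
        have h1 : 0 < Ca α := Real.rpow_pos_of_pos h0 _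
        exact mul_pos (Real.rpow_pos_of_pos h1 _) (Real.rpow_pos_of_pos (by norm_num) _)
      have hμ : μFH α k < μFH α 1 := muFH_lt hα hα' k hk
      have h2 : Ca α ^ (4-α) * (2:ℝ)^(-(4-α)) * (μFH α k + μFH α 0) < 2 := by
        calc Ca α ^ (4-α) * (2:ℝ)^(-(4-α)) * (μFH α k + μFH α 0)
            < Ca α ^ (4-α) * (2:ℝ)^(-(4-α)) * (μFH α 1 + μFH α 0) := by
              exact mul_lt_mul_of_pos_left (by linarith) hC
          _ = 2 := hkey
      unfold lamFH
      exact (div_lt_div_iff_of_pos_right hd).mpr h2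
    · rw [div_lt_one hd]; nlinarith
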